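/- Let χ be a primitive Dirichlet character of modulus k, m ≥ 1 an integer, r a positive integer, and x real. Then Σ_{j=0}^{r-1} 𝔅_{m,χ}(x + jk/r) = χ(r) r^{1-m} 𝔅_{m,χ}(r x). -/

import Mathlib

open Finset

/-- Bernoulli polynomial evaluated on ℝ. -/
noncomputable def bernPoly (n : ℕ) (x : ℝ) : ℝ :=
  ((Polynomial.bernoulli n).map (algebraMap ℚ ℝ)).eval x

/-- Periodic Bernoulli function 𝔅ₙ (with 𝔅₁ vanishing at integers). -/
noncomputable def pB (n : ℕ) (x : ℝ) : ℝ :=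
  if n = 1 ∧ Int.fract x = 0 then 0 else bernPoly n (Int.fract x)

/-- Euler polynomial Eₙ (via the standard Bernoulli identity). -/
noncomputable def eulerPoly (n : ℕ) (x : ℝ) : ℝ :=
  2 ^ (n + 1) / (n + 1) * (bernPoly (n + 1) ((x + 1) / 2) - bernPoly (n + 1) (x / 2))

/-- Periodic Euler function ℰₙ, with ℰₙ(x+m) = (-1)^m ℰₙ(x). -/
noncomputable def pE (n : ℕ) (x : ℝ) : ℝ :=
  (-1 : ℝ) ^ ⌊x⌋ * eulerPoly n (Int.fract x)

/-- Conjugate Dirichlet character χ̄. -/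
noncomputable def conjChar {k : ℕ} (χ : DirichletCharacter ℂ k) : DirichletCharacter ℂ k :=
  χ.ringHomComp (starRingEnd ℂ)

/-- Generalized Bernoulli function 𝔅_{m,χ}(x) = k^{m-1} Σ_{j=0}^{k-1} χ̄(j) 𝔅_m((j+x)/k). -/
noncomputable def genB {k : ℕ} (χ : DirichletCharacter ℂ k) (m : ℕ) (x : ℝ) : ℂ :=
  (k : ℂ) ^ ((m : ℤ) - 1) *
    ∑ j ∈ Finset.range k, conjChar χ j * ((pB m ((j + x) / k) : ℝ) : ℂ)

/-- Character Euler function ℰ_{m,χ}(x) = k^m Σ_{j=0}^{k-1} (-1)^j χ̄(j) ℰ_m((j+x)/k). -/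
noncomputable def genE {k : ℕ} (χ : DirichletCharacter ℂ k) (m : ℕ) (x : ℝ) : ℂ :=
  (k : ℂ) ^ m *
    ∑ j ∈ Finset.range k, (-1 : ℂ) ^ j * conjChar χ j * ((pE m ((j + x) / k) : ℝ) : ℂ)

/-- Character Hardy–Berndt sum s_{1,p}(d,c:χ). -/
noncomputable def s1p {k : ℕ} (χ : DirichletCharacter ℂ k) (p d c : ℕ) : ℂ :=
  ∑ n ∈ Finset.Icc 1 (c * k),
    χ n * genE χ (p - 1) ((d : ℝ) * n / c) * ((pB 1 ((n : ℝ) / ((c : ℝ) * k)) : ℝ) : ℂ)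

/-- Character Hardy–Berndt sum s_{2,p}(d,c:χ). -/
noncomputable def s2p {k : ℕ} (χ : DirichletCharacter ℂ k) (p d c : ℕ) : ℂ :=
  ∑ n ∈ Finset.Icc 1 (c * k),
    (-1 : ℂ) ^ n * χ n * genB χ p ((d : ℝ) * n / c) * ((pB 1 ((n : ℝ) / ((c : ℝ) * k)) : ℝ) : ℂ)

/-- Character Hardy–Berndt sum s_{5,p}(d,c:χ). -/
noncomputable def s5p {k : ℕ} (χ : DirichletCharacter ℂ k) (p d c : ℕ) : ℂ :=
  ∑ n ∈ Finset.Icc 1 (c * k),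
    (-1 : ℂ) ^ n * χ n * genE χ (p - 1) ((d : ℝ) * n / c) * ((pB 1 ((n : ℝ) / ((c : ℝ) * k)) : ℝ) : ℂ)

open Polynomial


lemma sum_range_shift {M : Type*} [AddCommGroup M] (f : ℕ → M) (r : ℕ) :
    ∑ j ∈ range r, f (j + 1) = ∑ j ∈ range r, f j + f r - f 0 := by
  have h1 := Finset.sum_range_succ' f r
  rw [Finset.sum_range_succ f r] at h1
  rw [eq_sub_iff_add_eq, ← h1]

/-- The Raabe polynomial. -/
noncomputable def Qpoly (r m : ℕ) : ℚ[X] :=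
  C ((r:ℚ))^m * ∑ j ∈ range r, (Polynomial.bernoulli m).comp (C ((r:ℚ))⁻¹ * (X + C (j:ℚ)))
    - C (r:ℚ) * Polynomial.bernoulli m

lemma Qpoly_eval (r m : ℕ) (x : ℚ) :
    (Qpoly r m).eval x =
      (r:ℚ)^m * ∑ j ∈ range r, (Polynomial.bernoulli m).eval ((r:ℚ)⁻¹ * (x + j))
        - (r:ℚ) * (Polynomial.bernoulli m).eval x := by
  simp [Qpoly, eval_finset_sum, eval_comp]

lemma bern_eval_add_one (m : ℕ) (y : ℚ) :
    (Polynomial.bernoulli m).eval (y + 1) = (Polynomial.bernoulli m).eval y + m * y ^ (m-1) := by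
  rw [add_comm]; exact Polynomial.bernoulli_eval_one_add m y

lemma key_step (r m : ℕ) (hr : 0 < r) (n : ℕ) :
    (Qpoly r m).eval ((n:ℚ) + 1) = (Qpoly r m).eval (n:ℚ) := by
  have hrQ : (r:ℚ) ≠ 0 := Nat.cast_ne_zero.mpr hr.ne'
  rw [Qpoly_eval, Qpoly_eval]
  have hshift : ∑ j ∈ range r, (Polynomial.bernoulli m).eval ((r:ℚ)⁻¹ * ((n:ℚ) + 1 + j))
      = ∑ j ∈ range r, (Polynomial.bernoulli m).eval ((r:ℚ)⁻¹ * ((n:ℚ) + j))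
        + (Polynomial.bernoulli m).eval ((r:ℚ)⁻¹ * ((n:ℚ) + r))
        - (Polynomial.bernoulli m).eval ((r:ℚ)⁻¹ * ((n:ℚ) + 0)) := by
    have := sum_range_shift (fun j => (Polynomial.bernoulli m).eval ((r:ℚ)⁻¹ * ((n:ℚ) + j))) r
    push_cast at this
    rw [← this]
    apply Finset.sum_congr rfl; intro j _; congr 1; push_cast; ring
  rw [hshift, add_zero]
  have h1 : (r:ℚ)⁻¹ * ((n:ℚ) + r) = (r:ℚ)⁻¹ * (n:ℚ) + 1 := by field_simp
  rw [h1, bern_eval_add_one, bern_eval_add_one]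
  have hpow : (r:ℚ)^m * ((m:ℚ) * ((r:ℚ)⁻¹ * n)^(m-1)) = (r:ℚ) * ((m:ℚ) * (n:ℚ)^(m-1)) := by
    cases m with
    | zero => simp
    | succ s =>
      simp only [Nat.add_sub_cancel]
      rw [mul_pow, pow_succ]
      field_simp
      have hrr : (r:ℚ)^s * (r:ℚ)⁻¹^s = 1 := by rw [← mul_pow, mul_inv_cancel₀ hrQ, one_pow]
      linear_combination (n:ℚ)^s * hrr
  linear_combination hpow

lemma Qpoly_const (r m : ℕ) (hr : 0 < r) :
    Qpoly r m = C ((Qpoly r m).eval 0) := by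
  apply Polynomial.eq_of_infinite_eval_eq
  apply Set.infinite_of_injective_forall_mem (f := fun n : ℕ => (n : ℚ))
    (Nat.cast_injective)
  intro n
  simp only [Set.mem_setOf_eq, eval_C]
  induction n with
  | zero => norm_num
  | succ p ih => push_cast; rw [key_step r m hr p, ih]

lemma Qpoly_deriv (r m : ℕ) (hr : 0 < r) :
    derivative (Qpoly r (m + 1)) = C (((m:ℚ) + 1)) * Qpoly r m := by
  have hrQ : (r:ℚ) ≠ 0 := Nat.cast_ne_zero.mpr hr.ne'
  simp only [Qpoly, derivative_sub, derivative_mul, derivative_C, derivative_pow,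
    derivative_sum, Polynomial.derivative_comp, Polynomial.derivative_bernoulli_add_one,
    derivative_add, derivative_X, derivative_C, zero_mul, zero_add, mul_sub]
  have hab : C ((r:ℚ)) * C ((r:ℚ))⁻¹ = 1 := by
    rw [← C_mul, mul_inv_cancel₀ hrQ, C_1]
  simp only [mul_comp, add_comp, natCast_comp, one_comp, mul_zero, zero_mul, zero_add,
    add_zero, one_mul, mul_one, ← Finset.mul_sum]
  have h3 : ∀ W : ℚ[X], C ((r:ℚ))^(m+1) * (C ((r:ℚ))⁻¹ * W) = C ((r:ℚ))^m * W := by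
    intro W
    rw [pow_succ, mul_assoc, ← mul_assoc (C ((r:ℚ))), hab, one_mul]
  rw [h3]
  simp only [map_add, map_one, Polynomial.C_eq_natCast]
  ring

lemma Qpoly_zero (r m : ℕ) (hr : 0 < r) : Qpoly r m = 0 := by
  have h := Qpoly_const r (m+1) hr
  have hd := Qpoly_deriv r m hr
  rw [h, derivative_C] at hd
  have : Qpoly r m = 0 := by
    have hne : ((m:ℚ) + 1) ≠ 0 := by positivity
    have := hd.symm
    rcases mul_eq_zero.mp this with h' | h'
    · exact absurd (C_eq_zero.mp h') hne
    · exact h'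
  exact this


lemma bernPoly_raabe (r m : ℕ) (hr : 0 < r) (x : ℝ) :
    (r:ℝ)^m * ∑ j ∈ range r, bernPoly m ((x + j)/r) = r * bernPoly m x := by
  have h := congrArg (fun p => Polynomial.eval x (p.map (algebraMap ℚ ℝ))) (Qpoly_zero r m hr)
  simp only [Qpoly, Polynomial.map_sub, Polynomial.map_mul, Polynomial.map_pow,
    Polynomial.map_sum, Polynomial.map_comp, Polynomial.map_add, Polynomial.map_C,
    Polynomial.map_X, Polynomial.map_zero, eval_sub, eval_mul, eval_pow, eval_C,
    eval_finset_sum, eval_comp, eval_add, eval_X, eval_zero, map_inv₀, map_natCast,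
    Polynomial.map_natCast, Polynomial.eval_natCast] at h
  rw [sub_eq_zero] at h
  simpa [bernPoly, div_eq_inv_mul] using h


lemma pB_add_int (m : ℕ) (x : ℝ) (n : ℤ) : pB m (x + n) = pB m x := by
  simp [pB, Int.fract_add_intCast]

lemma sum_shift_periodic (g : ℤ → ℝ) (r : ℕ) (hg : ∀ s, g (s + r) = g s) (n : ℤ) :
    ∑ j ∈ range r, g (n + j) = ∑ j ∈ range r, g j := by
  induction n using Int.induction_on with
  | zero => simp
  | succ k ih =>
    have h := sum_range_shift (fun j => g (k + j)) r
    push_cast at h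
    have e1 : ∀ j ∈ range r, g ((k:ℤ) + 1 + j) = g ((k:ℤ) + (j + 1)) := by
      intro j _; congr 1; push_cast; ring
    rw [Finset.sum_congr rfl e1, h]
    have h2 : g ((k:ℤ) + r) = g ((k:ℤ) + 0) := by
      rw [show (k:ℤ) + r = ((k:ℤ) + 0) + r by ring, hg]
    rw [h2, ih]; ring
  | pred k ih =>
    have h := sum_range_shift (fun j => g (-(k:ℤ) - 1 + j)) r
    push_cast at h
    have e1 : ∀ j ∈ range r, g (-(k:ℤ) + j) = g (-(k:ℤ) - 1 + (j + 1)) := by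
      intro j _; congr 1; push_cast; ring
    rw [Finset.sum_congr rfl e1] at ih
    have h2 : g (-(k:ℤ) - 1 + r) = g (-(k:ℤ) - 1 + 0) := by
      rw [show -(k:ℤ) - 1 + r = (-(k:ℤ) - 1 + 0) + r by ring, hg]
    rw [h2] at h
    have goal' : (∑ j ∈ range r, g (-(k:ℤ) - 1 + j)) = ∑ j ∈ range r, g j := by linarith
    rw [← goal']

lemma pB_raabe (r m : ℕ) (hr : 0 < r) (y : ℝ) :
    (r:ℝ)^m * ∑ j ∈ range r, pB m ((y + j)/r) = r * pB m y := by
  have hrR : (0:ℝ) < r := by exact_mod_cast hr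
  set t := Int.fract y with ht
  have ht0 : 0 ≤ t := Int.fract_nonneg y
  have ht1 : t < 1 := Int.fract_lt_one y
  have hper : ∀ w : ℝ, pB m (w + 1) = pB m w := by
    intro w
    have := pB_add_int m w 1
    simpa using this
  have hstep1 : ∑ j ∈ range r, pB m ((y + j)/r) = ∑ j ∈ range r, pB m ((t + j)/r) := by
    have h := sum_shift_periodic (fun s : ℤ => pB m ((t + (s:ℝ))/r)) r
      (fun s => by
        show pB m ((t + ((s:ℤ) + (r:ℤ) : ℤ))/r) = pB m ((t + s)/r)
        push_cast
        rw [show (t + ((s:ℝ) + r))/r = (t + (s:ℝ))/r + 1 by field_simp; ring]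
        exact hper _) ⌊y⌋
    have e : ∀ j ∈ range r, pB m ((y + j)/r) = pB m ((t + ((⌊y⌋ + (j:ℤ) : ℤ) : ℝ))/r) := by
      intro j _
      have harg : (y + (j:ℝ)) = (t + ((⌊y⌋ + (j:ℤ) : ℤ) : ℝ)) := by
        push_cast
        rw [ht]
        linear_combination -(Int.floor_add_fract y)
      rw [harg]
    rw [Finset.sum_congr rfl e, h]
    apply Finset.sum_congr rfl
    intro j _
    norm_num
  rw [hstep1]
  -- fract of (t+j)/r is itself
  have hfr : ∀ j ∈ range r, Int.fract ((t + (j:ℝ))/r) = (t + (j:ℝ))/r := by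
    intro j hj
    rw [Int.fract_eq_self]
    constructor
    · positivity
    · rw [div_lt_one hrR]
      have : (j:ℝ) ≤ (r:ℝ) - 1 := by
        have := Finset.mem_range.mp hj
        have : (j:ℝ) + 1 ≤ (r:ℝ) := by exact_mod_cast this
        linarith
      linarith
  by_cases hc : m = 1 ∧ t = 0
  · obtain ⟨hm1, ht'⟩ := hc
    subst hm1
    have hy : pB 1 y = 0 := by
      simp [pB, ← ht, ht']
    rw [hy, mul_zero]
    rw [ht']
    have hsum : ∑ j ∈ range r, pB 1 ((0 + (j:ℝ))/r)
        = ∑ j ∈ range r, bernPoly 1 ((0 + (j:ℝ))/r) - bernPoly 1 0 := by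
      have h0 : (0:ℕ) ∈ range r := Finset.mem_range.mpr hr
      rw [← Finset.sum_erase_add (range r) (fun j : ℕ => pB 1 ((0 + (j:ℝ))/(r:ℝ))) h0,
        ← Finset.sum_erase_add (range r) (fun j : ℕ => bernPoly 1 ((0 + (j:ℝ))/(r:ℝ))) h0]
      have e : ∀ j ∈ (range r).erase 0, pB 1 ((0 + (j:ℝ))/r) = bernPoly 1 ((0 + (j:ℝ))/r) := by
        intro j hj
        have hj0 : j ≠ 0 := Finset.ne_of_mem_erase hj
        have hjr : j ∈ range r := Finset.mem_of_mem_erase hj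
        have hfr' := hfr j hjr
        rw [show t = (0:ℝ) from ht'] at hfr'
        have hpos : (0:ℝ) < (0 + (j:ℝ))/r := by
          have : (0:ℝ) < (j:ℝ) := by exact_mod_cast Nat.pos_of_ne_zero hj0
          positivity
        unfold pB
        rw [hfr', if_neg]
        rintro ⟨-, habs⟩
        linarith
      rw [Finset.sum_congr rfl e]
      have hz : pB 1 ((0 + ((0:ℕ):ℝ))/(r:ℝ)) = 0 := by
        norm_num [pB]
      have hz2 : bernPoly 1 ((0 + ((0:ℕ):ℝ))/(r:ℝ)) = bernPoly 1 0 := by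
        norm_num
      rw [hz, hz2]
      ring
    rw [hsum]
    have hraabe := bernPoly_raabe r 1 hr 0
    have : ∑ j ∈ range r, bernPoly 1 ((0 + (j:ℝ))/r) = bernPoly 1 0 := by
      rw [pow_one] at hraabe
      have := mul_left_cancel₀ hrR.ne' hraabe
      exact this
    rw [this]
    ring
  · have hy : pB m y = bernPoly m t := by
      unfold pB
      rw [← ht, if_neg hc]
    have e : ∀ j ∈ range r, pB m ((t + (j:ℝ))/r) = bernPoly m ((t + (j:ℝ))/r) := by
      intro j hj
      unfold pB
      rw [hfr j hj, if_neg]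
      rintro ⟨hm1, habs⟩
      apply hc
      refine ⟨hm1, ?_⟩
      have hj0 : (0:ℝ) ≤ (j:ℝ) := Nat.cast_nonneg j
      have : t + (j:ℝ) = 0 := by
        field_simp at habs
        rw [mul_zero] at habs
        exact habs
      have : t = 0 ∧ (j:ℝ) = 0 := by constructor <;> linarith
      exact this.1
    rw [Finset.sum_congr rfl e, hy]
    exact bernPoly_raabe r m hr t


lemma conjChar_apply {k : ℕ} (χ : DirichletCharacter ℂ k) (a : ZMod k) :
    conjChar χ a = (starRingEnd ℂ) (χ a) := MulChar.ringHomComp_apply _ _ _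

lemma star_char_mul_self {k : ℕ} [NeZero k] (χ : DirichletCharacter ℂ k) (u : (ZMod k)ˣ) :
    (starRingEnd ℂ) (χ ↑u) * χ ↑u = 1 := by
  set z := χ (↑u : ZMod k) with hz
  set n := Fintype.card (ZMod k)ˣ with hn
  have hn0 : n ≠ 0 := Fintype.card_ne_zero
  have hpow : z ^ n = 1 := by
    rw [hz, ← map_pow, ← Units.val_pow_eq_pow_val, pow_card_eq_one, Units.val_one, map_one]
  have habs : ‖z‖ = 1 := by
    have h1 : ‖z‖ ^ n = 1 := by rw [← norm_pow, hpow, norm_one]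
    have h0 : 0 ≤ ‖z‖ := norm_nonneg _
    rcases lt_trichotomy (‖z‖) 1 with h | h | h
    · have := pow_lt_one₀ h0 h hn0
      rw [h1] at this; exact absurd this (lt_irrefl 1)
    · exact h
    · have := one_lt_pow₀ h hn0
      rw [h1] at this; exact absurd this (lt_irrefl 1)
  have : z * (starRingEnd ℂ) z = ((Complex.normSq z : ℝ) : ℂ) := Complex.mul_conj z
  rw [mul_comm] at this
  rw [this, Complex.normSq_eq_norm_sq, habs]
  norm_num

lemma conj_char_inv {k : ℕ} [NeZero k] (χ : DirichletCharacter ℂ k) (u : (ZMod k)ˣ) :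
    (starRingEnd ℂ) (χ ↑(u⁻¹)) = χ ↑u := by
  have h1 : χ ↑(u⁻¹) * χ ↑u = 1 := by
    rw [← map_mul, ← Units.val_mul, inv_mul_cancel, Units.val_one, map_one]
  have h2 : (starRingEnd ℂ) (χ ↑(u⁻¹)) * (starRingEnd ℂ) (χ ↑u) = 1 := by
    rw [← map_mul, h1, map_one]
  have h3 := star_char_mul_self χ u
  calc (starRingEnd ℂ) (χ ↑(u⁻¹))
      = (starRingEnd ℂ) (χ ↑(u⁻¹)) * ((starRingEnd ℂ) (χ ↑u) * χ ↑u) := by rw [h3, mul_one]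
    _ = ((starRingEnd ℂ) (χ ↑(u⁻¹)) * (starRingEnd ℂ) (χ ↑u)) * χ ↑u := by ring
    _ = χ ↑u := by rw [h2, one_mul]

open DirichletCharacter in
lemma prim_orth {k : ℕ} [NeZero k] (χ : DirichletCharacter ℂ k) (hprim : χ.IsPrimitive)
    (n : ℕ) (hnk : n ∣ k) (hne : n ≠ k) (c : ℕ) (hc : c < n) :
    ∑ t ∈ range (k / n), χ (((c + t * n : ℕ) : ZMod k)) = 0 := by
  have kpos : 0 < k := Nat.pos_of_ne_zero (NeZero.ne k)
  have npos : 0 < n := by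
    rcases Nat.eq_zero_or_pos n with h | h
    · subst h; exact absurd (Nat.eq_zero_of_zero_dvd hnk).symm hne
    · exact h
  have hlt : n < k := lt_of_le_of_ne (Nat.le_of_dvd kpos hnk) hne
  have hnft : ¬ χ.FactorsThrough n := by
    intro hft
    have hle : χ.conductor ≤ n := Nat.sInf_le hft
    rw [(isPrimitive_def χ).mp hprim] at hle
    omega
  have hker : ¬ ((ZMod.unitsMap hnk).ker ≤ χ.toUnitHom.ker) :=
    fun h => hnft ((factorsThrough_iff_ker_unitsMap hnk).mpr h)
  obtain ⟨u, hu1, hu2⟩ := SetLike.not_le_iff_exists.mp hker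
  rw [MonoidHom.mem_ker] at hu1
  have hχu : χ ↑u ≠ 1 := by
    intro h
    apply hu2
    rw [MonoidHom.mem_ker]
    ext
    rw [MulChar.coe_toUnitHom, h, Units.val_one]
  have hcastu : ZMod.castHom hnk (ZMod n) ↑u = 1 := by
    have : ((ZMod.unitsMap hnk u : (ZMod n)ˣ) : ZMod n) = ((1 : (ZMod n)ˣ) : ZMod n) := by
      rw [hu1]
    rw [ZMod.unitsMap_def] at this
    simpa using this
  have hcastuinv : ZMod.castHom hnk (ZMod n) ↑(u⁻¹) = 1 := by
    have : ZMod.unitsMap hnk u⁻¹ = 1 := by rw [map_inv, hu1, inv_one]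
    have h2 : ((ZMod.unitsMap hnk u⁻¹ : (ZMod n)ˣ) : ZMod n) = ((1 : (ZMod n)ˣ) : ZMod n) := by
      rw [this]
    rw [ZMod.unitsMap_def] at h2
    simpa using h2
  set A : Finset (ZMod k) :=
    Finset.univ.filter (fun z => ZMod.castHom hnk (ZMod n) z = (c : ZMod n)) with hA
  have hbound : ∀ t, t ∈ range (k / n) → c + t * n < k := by
    intro t ht
    have ht' : t + 1 ≤ k / n := Finset.mem_range.mp ht
    have h2 : (t + 1) * n ≤ (k / n) * n := Nat.mul_le_mul_right n ht'
    rw [Nat.div_mul_cancel hnk] at h2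
    have : (t + 1) * n = t * n + n := by ring
    omega
  have claim1 : ∑ t ∈ range (k / n), χ (((c + t * n : ℕ) : ZMod k)) = ∑ z ∈ A, χ z := by
    apply Finset.sum_nbij' (i := fun t => ((c + t * n : ℕ) : ZMod k)) (j := fun z => z.val / n)
    · intro t ht
      rw [hA, Finset.mem_filter]
      refine ⟨Finset.mem_univ _, ?_⟩
      rw [map_natCast]
      push_cast
      rw [ZMod.natCast_self, mul_zero, add_zero]
    · intro z hz
      rw [Finset.mem_range]
      exact Nat.div_lt_div_of_lt_of_dvd hnk (ZMod.val_lt z)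
    · intro t ht
      rw [ZMod.val_cast_of_lt (hbound t ht), Nat.add_mul_div_right _ _ npos,
        Nat.div_eq_of_lt hc, zero_add]
    · intro z hz
      rw [hA, Finset.mem_filter] at hz
      have hzv : z.val % n = c := by
        have h1 : ((z.val : ℕ) : ZMod n) = (c : ZMod n) := by
          have h0 := hz.2
          rw [ZMod.castHom_apply] at h0
          rw [ZMod.natCast_val]
          exact h0
        have h2 := (ZMod.natCast_eq_natCast_iff' _ _ _).mp h1
        rwa [Nat.mod_eq_of_lt hc] at h2
      have : c + z.val / n * n = z.val := by
        conv_rhs => rw [← Nat.mod_add_div z.val n]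
        rw [hzv, mul_comm]
      rw [this, ZMod.natCast_zmod_val]
    · intro t ht; rfl
  have claim2 : ∑ z ∈ A, χ z = χ ↑u * ∑ z ∈ A, χ z := by
    rw [Finset.mul_sum]
    apply Finset.sum_nbij' (i := fun z => ((u⁻¹ : (ZMod k)ˣ) : ZMod k) * z)
      (j := fun z => ((u : (ZMod k)ˣ) : ZMod k) * z)
    · intro z hz
      rw [hA, Finset.mem_filter] at hz ⊢
      refine ⟨Finset.mem_univ _, ?_⟩
      rw [map_mul, hcastuinv, one_mul]
      exact hz.2
    · intro z hz
      rw [hA, Finset.mem_filter] at hz ⊢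
      refine ⟨Finset.mem_univ _, ?_⟩
      rw [map_mul, hcastu, one_mul]
      exact hz.2
    · intro z _; exact Units.mul_inv_cancel_left u z
    · intro z _; exact Units.inv_mul_cancel_left u z
    · intro z _
      rw [← map_mul, Units.mul_inv_cancel_left]
  have hS : (1 - χ ↑u) * ∑ z ∈ A, χ z = 0 := by
    linear_combination claim2
  rw [claim1]
  rcases mul_eq_zero.mp hS with h | h
  · exact absurd (by linear_combination -h : χ ↑u = 1) hχu
  · exact h

lemma pB_congr_mod {k : ℕ} (hk : 0 < k) (m : ℕ) (z : ℝ) {a b : ℕ}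
    (h : (a : ZMod k) = (b : ZMod k)) :
    pB m (((a:ℝ) + z)/(k:ℝ)) = pB m (((b:ℝ) + z)/(k:ℝ)) := by
  have hkR : (0:ℝ) < (k:ℝ) := by exact_mod_cast hk
  have hmod : a ≡ b [MOD k] := (ZMod.natCast_eq_natCast_iff _ _ _).mp h
  obtain ⟨q, hq⟩ : (k:ℤ) ∣ ((b:ℤ) - (a:ℤ)) := hmod.dvd
  have hb : (b:ℝ) = (a:ℝ) + (k:ℝ) * (q:ℝ) := by
    have : (b:ℤ) = (a:ℤ) + (k:ℤ) * q := by linarith [hq]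
    exact_mod_cast congrArg (fun t : ℤ => (t:ℝ)) this
  have harg : ((b:ℝ) + z)/(k:ℝ) = ((a:ℝ) + z)/(k:ℝ) + (q:ℤ) := by
    rw [hb]
    push_cast
    field_simp
    ring
  rw [harg, pB_add_int]

lemma sum_range_zmod {k : ℕ} [NeZero k] (f : ℕ → ℂ) :
    ∑ a ∈ range k, f a = ∑ z : ZMod k, f z.val := by
  apply Finset.sum_nbij' (i := fun a : ℕ => (a : ZMod k)) (j := fun z : ZMod k => z.val)
  · intro a _; exact Finset.mem_univ _
  · intro z _; exact Finset.mem_range.mpr (ZMod.val_lt z)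
  · intro a ha; exact ZMod.val_cast_of_lt (Finset.mem_range.mp ha)
  · intro z _; exact ZMod.natCast_zmod_val z
  · intro a ha; rw [ZMod.val_cast_of_lt (Finset.mem_range.mp ha)]

lemma sum_range_mul_group (g : ℕ → ℂ) (n d : ℕ) :
    ∑ a ∈ range (n * d), g a = ∑ t ∈ range d, ∑ c ∈ range n, g (t * n + c) := by
  induction d with
  | zero => simp
  | succ d ih =>
    rw [Nat.mul_succ, Finset.sum_range_add, ih, Finset.sum_range_succ]
    congr 1
    apply Finset.sum_congr rfl
    intro c _
    congr 1
    ring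

lemma key_sum {k : ℕ} [NeZero k] (χ : DirichletCharacter ℂ k) (hprim : χ.IsPrimitive)
    (m r : ℕ) (hr : 0 < r) (z : ℝ) :
    ∑ a ∈ range k, conjChar χ a * ((pB m ((((r * a : ℕ) : ℝ) + z) / (k:ℝ)) : ℝ) : ℂ)
      = χ (r : ZMod k) * ∑ b ∈ range k, conjChar χ b * ((pB m (((b : ℝ) + z) / (k:ℝ)) : ℝ) : ℂ) := by
  have hk : 0 < k := Nat.pos_of_ne_zero (NeZero.ne k)
  by_cases hu : IsUnit ((r:ℕ) : ZMod k)
  · set u := hu.unit with hu'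
    have hur : (u : ZMod k) = ((r:ℕ) : ZMod k) := hu.unit_spec
    set F : ZMod k → ℂ := fun w =>
      conjChar χ w * ((pB m ((((((r:ℕ) : ZMod k) * w).val : ℝ) + z)/(k:ℝ)) : ℝ) : ℂ) with hF
    have hL : ∑ a ∈ range k, conjChar χ a * ((pB m ((((r * a : ℕ) : ℝ) + z) / (k:ℝ)) : ℝ) : ℂ)
        = ∑ w : ZMod k, F w := by
      rw [sum_range_zmod (fun a : ℕ =>
        conjChar χ a * ((pB m ((((r * a : ℕ) : ℝ) + z) / (k:ℝ)) : ℝ) : ℂ))]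
      apply Finset.sum_congr rfl
      intro w _
      rw [hF]
      simp only []
      rw [ZMod.natCast_zmod_val]
      congr 2
      apply pB_congr_mod hk
      push_cast
      rw [ZMod.natCast_zmod_val, ZMod.natCast_zmod_val]
    have hR : ∑ b ∈ range k, conjChar χ b * ((pB m (((b : ℝ) + z) / (k:ℝ)) : ℝ) : ℂ)
        = ∑ v : ZMod k, conjChar χ v * ((pB m (((v.val : ℝ) + z)/(k:ℝ)) : ℝ) : ℂ) := by
      rw [sum_range_zmod (fun b : ℕ => conjChar χ b * ((pB m (((b : ℝ) + z) / (k:ℝ)) : ℝ) : ℂ))]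
      apply Finset.sum_congr rfl
      intro v _
      rw [ZMod.natCast_zmod_val]
    rw [hL, hR]
    have hcomp := Equiv.sum_comp (Units.mulLeft u⁻¹) F
    rw [← hcomp]
    have e : ∀ v : ZMod k, F ((Units.mulLeft u⁻¹) v)
        = χ ((r:ℕ) : ZMod k) * (conjChar χ v * ((pB m (((v.val : ℝ) + z)/(k:ℝ)) : ℝ) : ℂ)) := by
      intro v
      rw [hF]
      simp only [Units.mulLeft_apply]
      have harg : ((r:ℕ) : ZMod k) * (((u⁻¹ : (ZMod k)ˣ) : ZMod k) * v) = v := by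
        rw [← hur]
        exact Units.mul_inv_cancel_left u v
      rw [harg, map_mul]
      have hcc : conjChar χ ((u⁻¹ : (ZMod k)ˣ) : ZMod k) = χ ((r:ℕ) : ZMod k) := by
        rw [conjChar_apply, conj_char_inv, hur]
      rw [hcc]
      ring
    rw [Fintype.sum_congr _ _ e, ← Finset.mul_sum]
  · have hχr : χ ((r:ℕ) : ZMod k) = 0 := MulChar.map_nonunit χ hu
    rw [hχr, zero_mul]
    set d := Nat.gcd r k with hdd
    have hd : d ∣ k := Nat.gcd_dvd_right r k
    have hdr : d ∣ r := Nat.gcd_dvd_left r k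
    have hd1 : d ≠ 1 := fun h => hu ((ZMod.isUnit_iff_coprime r k).mpr h)
    set n := k / d with hn
    have hnk : n ∣ k := Nat.div_dvd_of_dvd hd
    have hkdn : k = n * d := by rw [hn, Nat.div_mul_cancel hd]
    have npos : 0 < n := by
      rcases Nat.eq_zero_or_pos n with h | h
      · rw [h] at hkdn; simp at hkdn; omega
      · exact h
    have hnek : n ≠ k := by
      intro h
      rw [hn] at h
      rcases (Nat.div_eq_self).mp h with h' | h'
      · omega
      · exact hd1 h'
    have hknd : k / n = d := by
      rw [hkdn]
      exact Nat.mul_div_cancel_left d npos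
    set g : ℕ → ℂ := fun a =>
      conjChar χ a * ((pB m ((((r * a : ℕ) : ℝ) + z) / (k:ℝ)) : ℝ) : ℂ) with hg
    show ∑ a ∈ range k, g a = 0
    rw [hkdn, sum_range_mul_group g n d, Finset.sum_comm]
    apply Finset.sum_eq_zero
    intro c hc
    have hcn : c < n := Finset.mem_range.mp hc
    have e : ∀ t ∈ range d, g (t * n + c)
        = conjChar χ ((c + t * n : ℕ) : ZMod k)
            * ((pB m ((((r * c : ℕ) : ℝ) + z) / (k:ℝ)) : ℝ) : ℂ) := by
      intro t _
      rw [hg]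
      simp only []
      have h1 : ((t * n + c : ℕ) : ZMod k) = ((c + t * n : ℕ) : ZMod k) := by
        push_cast; ring
      have hdvd : k ∣ r * n * t := by
        obtain ⟨r', hr'⟩ := hdr
        refine ⟨r' * t, ?_⟩
        rw [hkdn, hr']
        ring
      have h2 : ((r * (t * n + c) : ℕ) : ZMod k) = ((r * c : ℕ) : ZMod k) := by
        have h0 : ((r * n * t : ℕ) : ZMod k) = 0 :=
          (ZMod.natCast_eq_zero_iff _ _).mpr hdvd
        push_cast at h0 ⊢
        linear_combination h0
      rw [h1, pB_congr_mod hk m z h2]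
    rw [Finset.sum_congr rfl e, ← Finset.sum_mul]
    have horth : ∑ t ∈ range d, conjChar χ ((c + t * n : ℕ) : ZMod k) = 0 := by
      have h := prim_orth χ hprim n hnk hnek c hcn
      rw [hknd] at h
      calc ∑ t ∈ range d, conjChar χ ((c + t * n : ℕ) : ZMod k)
          = (starRingEnd ℂ) (∑ t ∈ range d, χ ((c + t * n : ℕ) : ZMod k)) := by
            rw [map_sum]
            apply Finset.sum_congr rfl
            intro t _
            rw [conjChar_apply]
        _ = 0 := by rw [h, map_zero]
    rw [horth, zero_mul]


theorem stmt6 (k : ℕ) (χ : DirichletCharacter ℂ k) (hprim : χ.IsPrimitive)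
    (m : ℕ) (hm : 1 ≤ m) (r : ℕ) (hr : 0 < r) (x : ℝ) :
    ∑ j ∈ Finset.range r, genB χ m (x + j * k / r) =
      χ r * (r : ℂ) ^ ((1 : ℤ) - m) * genB χ m (r * x) := by
  rcases Nat.eq_zero_or_pos k with hk0 | hk
  · subst hk0
    simp [genB]
  · haveI : NeZero k := ⟨hk.ne'⟩
    have hkR : (0:ℝ) < (k:ℝ) := by exact_mod_cast hk
    have hrR : (0:ℝ) < (r:ℝ) := by exact_mod_cast hr
    have hrC : ((r:ℂ)) ≠ 0 := by
      simp only [ne_eq, Nat.cast_eq_zero]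
      omega
    have hrmC : ((r:ℂ))^m ≠ 0 := pow_ne_zero _ hrC
    apply mul_left_cancel₀ hrmC
    have innerC : ∀ a : ℕ,
        (r:ℂ)^m * ∑ j ∈ range r, ((pB m (((a:ℝ) + (x + (j:ℝ)*(k:ℝ)/(r:ℝ)))/(k:ℝ)) : ℝ) : ℂ)
          = (r:ℂ) * ((pB m ((((r*a:ℕ):ℝ) + (r:ℝ)*x)/(k:ℝ)) : ℝ) : ℂ) := by
      intro a
      have hreal : (r:ℝ)^m * ∑ j ∈ range r, pB m (((a:ℝ) + (x + (j:ℝ)*(k:ℝ)/(r:ℝ)))/(k:ℝ))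
          = (r:ℝ) * pB m ((((r*a:ℕ):ℝ) + (r:ℝ)*x)/(k:ℝ)) := by
        have h := pB_raabe r m hr (((r:ℝ)*((a:ℝ)+x))/(k:ℝ))
        have e1 : ∀ j ∈ range r,
            pB m (((((r:ℝ)*((a:ℝ)+x))/(k:ℝ)) + (j:ℝ))/(r:ℝ))
              = pB m (((a:ℝ) + (x + (j:ℝ)*(k:ℝ)/(r:ℝ)))/(k:ℝ)) := by
          intro j _
          congr 1
          field_simp
          ring
        rw [Finset.sum_congr rfl e1] at h
        have e2 : ((r:ℝ)*((a:ℝ)+x))/(k:ℝ) = (((r*a:ℕ):ℝ) + (r:ℝ)*x)/(k:ℝ) := by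
          push_cast; ring
        rw [e2] at h
        exact h
      exact_mod_cast congrArg (fun t : ℝ => (t:ℂ)) hreal
    have hLHS : (r:ℂ)^m * ∑ j ∈ Finset.range r, genB χ m (x + j * k / r)
        = (k:ℂ)^((m:ℤ)-1) * ((r:ℂ) * ∑ a ∈ range k,
            conjChar χ a * ((pB m ((((r*a:ℕ):ℝ) + (r:ℝ)*x)/(k:ℝ)) : ℝ) : ℂ)) := by
      simp only [genB, Finset.mul_sum]
      rw [Finset.sum_comm]
      apply Finset.sum_congr rfl
      intro a _
      have hstep : ∑ j ∈ Finset.range r,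
          (r:ℂ)^m * ((k:ℂ)^((m:ℤ)-1) * (conjChar χ a *
            ((pB m (((a:ℝ) + (x + (j:ℝ)*(k:ℝ)/(r:ℝ)))/(k:ℝ)) : ℝ):ℂ)))
          = (k:ℂ)^((m:ℤ)-1) * (conjChar χ a * ((r:ℂ)^m * ∑ j ∈ Finset.range r,
            ((pB m (((a:ℝ) + (x + (j:ℝ)*(k:ℝ)/(r:ℝ)))/(k:ℝ)) : ℝ):ℂ))) := by
        rw [Finset.mul_sum, Finset.mul_sum, Finset.mul_sum]
        apply Finset.sum_congr rfl
        intro j _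
        ring
      rw [hstep, innerC a]
      ring
    rw [hLHS, key_sum χ hprim m r hr ((r:ℝ)*x)]
    simp only [genB]
    have hzp : ((r:ℂ))^((1:ℤ) - (m:ℤ)) = (r:ℂ) * ((r:ℂ)^m)⁻¹ := by
      rw [zpow_sub₀ hrC, zpow_one, zpow_natCast]
      exact div_eq_mul_inv _ _
    rw [hzp]
    field_simp
    all_goals first | (exact div_eq_mul_inv _ _) | ring
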